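/- arXiv:1311.2466 — 7 statements merged into one kernel-verified Lean document; each statement's English description precedes it below -/
import Mathlib

section
/- For all real numbers δ and x, if 0 < δ < 1/2 and δ·|x| ≤ 1/2, then |(1+δ)^x − 1| ≥ (1/4)·δ·|x|. -/
theorem abs_rpow_sub_one_ge (δ x : ℝ) (hδ0 : 0 < δ) (hδ : δ < 1/2)
    (hx : δ * |x| ≤ 1/2) :
    (1/4) * δ * |x| ≤ |(1 + δ) ^ x - 1| := by
  have h1δ : (0:ℝ) < 1 + δ := by linarith
  set L := Real.log (1 + δ) with hLdef
  have hrw : (1 + δ) ^ x = Real.exp (x * L) := by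
    rw [Real.rpow_def_of_pos h1δ, mul_comm]
  have hLup : L ≤ δ := by
    have := Real.log_le_sub_one_of_pos h1δ
    linarith
  have hLlow : δ / (1 + δ) ≤ L := by
    have h2 : (0:ℝ) < 1 / (1 + δ) := by positivity
    have := Real.log_le_sub_one_of_pos h2
    rw [Real.log_div one_ne_zero (ne_of_gt h1δ), Real.log_one] at this
    have : -L ≤ 1 / (1 + δ) - 1 := by linarith
    have h3 : 1 - 1 / (1 + δ) = δ / (1 + δ) := by field_simp; ring
    linarith
  have hLlow' : (2/3) * δ ≤ L := by
    have h4 : (2/3) * δ ≤ δ / (1 + δ) := by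
      rw [le_div_iff₀ h1δ]
      nlinarith
    linarith [hLlow]
  have hLpos : 0 < L := by nlinarith
  rw [hrw]
  rcases le_or_gt 0 x with hx0 | hx0
  · have habs : |x| = x := abs_of_nonneg hx0
    rw [habs]
    have ht : (2/3) * δ * x ≤ x * L := by nlinarith
    have he : x * L + 1 ≤ Real.exp (x * L) := Real.add_one_le_exp _
    have : 0 ≤ Real.exp (x * L) - 1 := by nlinarith
    rw [abs_of_nonneg this]
    nlinarith
  · have habs : |x| = -x := abs_of_neg hx0
    rw [habs]
    have hx' : δ * -x ≤ 1/2 := habs ▸ hx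
    have htneg : x * L ≤ 0 := by nlinarith
    have ht : (2/3) * δ * (-x) ≤ -(x * L) := by nlinarith
    have htub : -(x * L) ≤ 1/2 := by nlinarith
    have he1 : x * L + 1 ≤ Real.exp (x * L) := Real.add_one_le_exp _
    have hehalf : (1:ℝ)/2 ≤ Real.exp (x * L) := by linarith
    have he2 : -(x * L) + 1 ≤ Real.exp (-(x * L)) := Real.add_one_le_exp _
    have hkey : -(x * L) * Real.exp (x * L) ≤ 1 - Real.exp (x * L) := by
      have hmul := mul_le_mul_of_nonneg_right he2 (Real.exp_nonneg (x * L))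
      rw [add_mul, one_mul, ← Real.exp_add, neg_add_cancel, Real.exp_zero] at hmul
      linarith
    have hle1 : Real.exp (x * L) ≤ 1 := by
      calc Real.exp (x * L) ≤ Real.exp 0 := Real.exp_le_exp.mpr htneg
        _ = 1 := Real.exp_zero
    rw [abs_of_nonpos (by linarith)]
    nlinarith [Real.exp_pos (x * L)]
end

section
/- For all real numbers δ and γ, if 0 < δ < 1/2 and γ ≥ 0, then (1+δ)^γ ≥ (1+γ)^{δ/2}. Equivalently, γ ≥ (δ/2)·log_{(1+δ)}(1+γ). -/
theorem rpow_ineq (δ γ : ℝ) (hδ0 : 0 < δ) (hδ : δ < 1/2) (hγ : 0 ≤ γ) :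
    (1 + γ) ^ (δ / 2) ≤ (1 + δ) ^ γ ∧
      (δ / 2) * Real.logb (1 + δ) (1 + γ) ≤ γ := by
  have h1γ : (0:ℝ) < 1 + γ := by linarith
  have h1δ : (0:ℝ) < 1 + δ := by linarith
  -- log(1+γ) ≤ γ
  have hlogγ : Real.log (1 + γ) ≤ γ := by
    have := Real.log_le_sub_one_of_pos h1γ
    linarith
  have hlogγ0 : 0 ≤ Real.log (1 + γ) := Real.log_nonneg (by linarith)
  -- δ/2 ≤ log(1+δ)
  have hexp : Real.exp (δ / 2) ≤ 1 + δ := by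
    have h1 : 1 - δ / 2 ≤ Real.exp (-(δ / 2)) := by
      have := Real.add_one_le_exp (-(δ / 2)); linarith
    have h2 : (0:ℝ) < 1 - δ / 2 := by linarith
    have h4 : Real.exp (δ / 2) * (1 - δ / 2) ≤ 1 := by
      have := mul_le_mul_of_nonneg_left h1 (Real.exp_pos (δ / 2)).le
      rwa [← Real.exp_add, add_neg_cancel, Real.exp_zero] at this
    nlinarith [Real.exp_pos (δ / 2)]
  have hlogδ : δ / 2 ≤ Real.log (1 + δ) :=
    (Real.le_log_iff_exp_le h1δ).mpr hexp
  have hlogδ0 : 0 < Real.log (1 + δ) := lt_of_lt_of_le (by linarith) hlogδ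
  -- key inequality
  have hkey : (δ / 2) * Real.log (1 + γ) ≤ γ * Real.log (1 + δ) := by
    calc (δ / 2) * Real.log (1 + γ) ≤ (δ / 2) * γ := by
          exact mul_le_mul_of_nonneg_left hlogγ (by linarith)
      _ ≤ Real.log (1 + δ) * γ := mul_le_mul_of_nonneg_right hlogδ hγ
      _ = γ * Real.log (1 + δ) := mul_comm _ _
  constructor
  · rw [Real.rpow_def_of_pos h1γ, Real.rpow_def_of_pos h1δ]
    exact Real.exp_le_exp.mpr (by nlinarith [hkey])
  · rw [Real.logb]
    rw [mul_div_assoc', div_le_iff₀ hlogδ0]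
    linarith
end

section
/- Let δ be a real number with 0 < δ < 1/2, let k be an integer, set z₁ = (1+δ)^k, and let z₂ ≥ 0 be real. Let a = z₁ + z₂ and let p = log_{(1+δ)}(a) − ⌊log_{(1+δ)}(a)⌋ be the fractional part of log_{(1+δ)}(a). Then z₂ ≥ (1/2)·δ·p·z₁. -/
theorem y2big (δ : ℝ) (hδ0 : 0 < δ) (hδ : δ < 1/2) (k : ℤ)
    (z₁ z₂ : ℝ) (hz₁ : z₁ = (1 + δ) ^ k) (hz₂ : 0 ≤ z₂)
    (a p : ℝ) (ha : a = z₁ + z₂)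
    (hp : p = Real.logb (1 + δ) a - ⌊Real.logb (1 + δ) a⌋) :
    (1/2) * δ * p * z₁ ≤ z₂ := by
  have h1 : (1:ℝ) < 1 + δ := by linarith
  have hb0 : (0:ℝ) < 1 + δ := by linarith
  have hz₁pos : 0 < z₁ := by rw [hz₁]; positivity
  have hapos : 0 < a := by rw [ha]; linarith
  set L := Real.logb (1 + δ) a with hL
  have harpow : (1 + δ) ^ L = a := Real.rpow_logb hb0 (by linarith) hapos
  have hz₁rpow : z₁ = (1 + δ) ^ (k:ℝ) := by
    rw [hz₁, Real.rpow_intCast]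
  have hkL : (k:ℝ) ≤ L := by
    have : Real.logb (1 + δ) z₁ ≤ L := by
      apply Real.logb_le_logb_of_le h1 hz₁pos
      rw [ha]; linarith
    rwa [hz₁rpow, Real.logb_rpow hb0 (by linarith)] at this
  have hkfloor : (k:ℝ) ≤ (⌊L⌋ : ℝ) := by
    exact_mod_cast Int.le_floor.mpr (by exact_mod_cast hkL)
  have hp0 : 0 ≤ p := by
    rw [hp]; have := Int.floor_le L; linarith
  have hlog : δ / 2 ≤ Real.log (1 + δ) := by
    have hinv : Real.log (1 / (1 + δ)) ≤ 1 / (1 + δ) - 1 :=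
      Real.log_le_sub_one_of_pos (by positivity)
    rw [Real.log_div one_ne_zero (by linarith), Real.log_one] at hinv
    have h2 : 1 - 1 / (1 + δ) = δ / (1 + δ) := by field_simp; ring
    have h3 : δ / 2 ≤ δ / (1 + δ) := by
      apply div_le_div_of_nonneg_left (le_of_lt hδ0) hb0 (by linarith)
    linarith
  have hexp : 1 + p * Real.log (1 + δ) ≤ (1 + δ) ^ p := by
    rw [Real.rpow_def_of_pos hb0]
    have := Real.add_one_le_exp (p * Real.log (1 + δ))
    calc 1 + p * Real.log (1 + δ) ≤ Real.exp (p * Real.log (1 + δ)) := by linarith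
      _ = Real.exp (Real.log (1 + δ) * p) := by ring_nf
  have hamge : z₁ * (1 + δ) ^ p ≤ a := by
    have : L = (⌊L⌋ : ℝ) + p := by rw [hp]; ring
    calc z₁ * (1 + δ) ^ p = (1 + δ) ^ ((k:ℝ) + p) := by
          rw [hz₁rpow, Real.rpow_add hb0]
      _ ≤ (1 + δ) ^ ((⌊L⌋:ℝ) + p) := by
          apply Real.rpow_le_rpow_left_iff h1 |>.mpr; linarith
      _ = (1 + δ) ^ L := by congr 1; linarith
      _ = a := harpow
  have key : z₁ * (1 + p * (δ/2)) ≤ a := by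
    have h4 : 1 + p * (δ/2) ≤ (1 + δ) ^ p := by
      have : p * (δ/2) ≤ p * Real.log (1 + δ) := by
        apply mul_le_mul_of_nonneg_left hlog hp0
      linarith
    calc z₁ * (1 + p * (δ/2)) ≤ z₁ * (1 + δ) ^ p := by
          apply mul_le_mul_of_nonneg_left h4 (le_of_lt hz₁pos)
      _ ≤ a := hamge
  rw [ha] at key
  nlinarith
end

section
/- Let δ be a real number with 0 < δ < 1/2. Let y₁, y₂ > 0 be reals, let k₁, k₂ be integers, set z₁ = (1+δ)^{k₁} and z₂ = (1+δ)^{k₂}, and define λᵢ = log_{(1+δ)}(zᵢ/yᵢ) for i = 1,2. Assume max(|λ₁|, |λ₂|) < 1/(4δ). Let a = z₁ + z₂ and let p = log_{(1+δ)}(a) − ⌊log_{(1+δ)}(a)⌋. Then |log_{(1+δ)}(a / (y₁ + y₂))| ≤ max(|λ₁|, |λ₂|) − (1/20)·δ·p·|λ₁ − λ₂|. -/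
private lemma log_ge_sub_one_div' {v : ℝ} (hv : 0 < v) : 1 - 1/v ≤ Real.log v := by
  have h := Real.log_le_sub_one_of_pos (show (0:ℝ) < 1/v by positivity)
  rw [one_div, Real.log_inv] at h
  have : (1:ℝ)/v = v⁻¹ := one_div v
  linarith [h]

set_option maxHeartbeats 2000000 in
private lemma self_correct_aux (δ : ℝ) (hδ0 : 0 < δ) (hδ : δ < 1/2)
    (y₁ y₂ : ℝ) (hy₁ : 0 < y₁) (hy₂ : 0 < y₂) (k₁ k₂ : ℤ)
    (z₁ z₂ : ℝ) (hz₁ : z₁ = (1 + δ) ^ k₁) (hz₂ : z₂ = (1 + δ) ^ k₂)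
    (lam₁ lam₂ : ℝ)
    (hlam₁ : lam₁ = Real.logb (1 + δ) (z₁ / y₁))
    (hlam₂ : lam₂ = Real.logb (1 + δ) (z₂ / y₂))
    (hord : lam₂ ≤ lam₁)
    (hmax : max |lam₁| |lam₂| < 1 / (4 * δ))
    (a p : ℝ) (ha : a = z₁ + z₂)
    (hp : p = Real.logb (1 + δ) a - ⌊Real.logb (1 + δ) a⌋) :
    |Real.logb (1 + δ) (a / (y₁ + y₂))| ≤
      max |lam₁| |lam₂| - (1/20) * δ * p * |lam₁ - lam₂| := by
  have hb1 : (1:ℝ) < 1 + δ := by linarith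
  have hb0 : (0:ℝ) < 1 + δ := by linarith
  have hbne : (1:ℝ) + δ ≠ 1 := ne_of_gt hb1
  set ℓ := Real.log (1 + δ) with hℓdef
  clear_value ℓ
  have hℓ0 : 0 < ℓ := by rw [hℓdef]; exact Real.log_pos hb1
  have hℓδ : ℓ ≤ δ := by
    rw [hℓdef]; have := Real.log_le_sub_one_of_pos hb0; linarith
  have hℓlb : 2/3*δ ≤ ℓ := by
    rw [hℓdef]
    have h1 := log_ge_sub_one_div' hb0
    have h2 : 1/(1+δ) ≤ 1 - 2/3*δ := by
      rw [div_le_iff₀ hb0]; nlinarith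
    linarith
  have hz₁0 : 0 < z₁ := by rw [hz₁]; exact zpow_pos hb0 k₁
  have hz₂0 : 0 < z₂ := by rw [hz₂]; exact zpow_pos hb0 k₂
  have ha0 : 0 < a := by rw [ha]; linarith
  have hy12 : 0 < y₁ + y₂ := by linarith
  set Δ := lam₁ - lam₂ with hΔdef
  clear_value Δ
  have hΔ0 : 0 ≤ Δ := by simp [hΔdef]; linarith
  -- bound on Δ * ℓ
  have h₁m : |lam₁| < 1/(4*δ) := lt_of_le_of_lt (le_max_left _ _) hmax
  have h₂m : |lam₂| < 1/(4*δ) := lt_of_le_of_lt (le_max_right _ _) hmax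
  have hΔδ : Δ * δ ≤ 1/2 := by
    have h1 : Δ ≤ |lam₁| + |lam₂| := by
      have := le_abs_self lam₁; have := neg_abs_le lam₂
      simp only [hΔdef]; linarith
    have h2 : |lam₁| * δ < 1/4 := by
      have := (mul_lt_mul_of_pos_right h₁m hδ0)
      have h4 : 1/(4*δ) * δ = 1/4 := by field_simp
      linarith [this, h4.le]
    have h3 : |lam₂| * δ < 1/4 := by
      have := (mul_lt_mul_of_pos_right h₂m hδ0)
      have h4 : 1/(4*δ) * δ = 1/4 := by field_simp
      linarith [this, h4.le]
    nlinarith [abs_nonneg lam₁, abs_nonneg lam₂]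
  have hΔℓ : Δ * ℓ ≤ 1/2 := by nlinarith
  have hΔℓ0 : 0 ≤ Δ * ℓ := mul_nonneg hΔ0 hℓ0.le
  -- B = (1+δ)^Δ
  set B := (1 + δ) ^ Δ with hBdef
  clear_value B
  have hBexp : B = Real.exp (ℓ * Δ) := by
    rw [hBdef, Real.rpow_def_of_pos hb0, hℓdef]
  have hB1 : 1 + Δ * ℓ ≤ B := by
    rw [hBexp]; have := Real.add_one_le_exp (ℓ * Δ); linarith [this]
  have hB0 : 0 < B := by rw [hBexp]; exact Real.exp_pos _
  have hBle : B ≤ 5/3 := by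
    rw [hBexp]
    have h1 : Real.exp (ℓ * Δ) ≤ Real.exp (1/2) := by
      apply Real.exp_le_exp.mpr; nlinarith
    have e2 : Real.exp ((1:ℝ)/2) * Real.exp ((1:ℝ)/2) = Real.exp 1 := by
      rw [← Real.exp_add]; norm_num
    have e3 : Real.exp 1 < 25/9 :=
      lt_trans Real.exp_one_lt_d9 (by norm_num)
    have e4 : (0:ℝ) < Real.exp ((1:ℝ)/2) := Real.exp_pos _
    have e5 : Real.exp ((1:ℝ)/2) ≤ 5/3 := by nlinarith
    linarith
  have hBval : B = z₁ * y₂ / (z₂ * y₁) := by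
    have h1 : (1 + δ) ^ (lam₁:ℝ) = z₁/y₁ := by
      rw [hlam₁]; exact Real.rpow_logb hb0 hbne (div_pos hz₁0 hy₁)
    have h2 : (1 + δ) ^ (lam₂:ℝ) = z₂/y₂ := by
      rw [hlam₂]; exact Real.rpow_logb hb0 hbne (div_pos hz₂0 hy₂)
    rw [hBdef, hΔdef, Real.rpow_sub hb0, h1, h2]
    field_simp
  -- u via min/max of k
  set K := max k₁ k₂ with hK
  set m := min k₁ k₂ with hm
  set u := (1 + δ) ^ (m - K) with hu
  clear_value u
  have hu0 : 0 < u := by rw [hu]; exact zpow_pos hb0 _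
  have hu1 : u ≤ 1 := by
    rw [hu]
    calc (1 + δ) ^ (m - K) ≤ (1+δ) ^ (0:ℤ) :=
          zpow_le_zpow_right₀ hb1.le (by rw [hm, hK]; omega)
      _ = 1 := zpow_zero _
  have hK0 : (0:ℝ) < (1 + δ) ^ K := zpow_pos hb0 _
  have hbM : (1 + δ) ^ m = (1 + δ) ^ K * u := by
    rw [hu, ← zpow_add₀ (ne_of_gt hb0)]
    congr 1; omega
  have haK : a = (1 + δ) ^ K * (1 + u) := by
    have hKM : (1 + δ) ^ k₁ + (1 + δ) ^ k₂ = (1 + δ) ^ K + (1 + δ) ^ m := by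
      rcases le_total k₁ k₂ with h | h
      · rw [hK, hm, max_eq_right h, min_eq_left h]; ring
      · rw [hK, hm, max_eq_left h, min_eq_right h]
    rw [ha, hz₁, hz₂, hKM, hbM]; ring
  have hM1 : (1 + δ) ^ m ≤ z₁ := by
    rw [hz₁]; exact zpow_le_zpow_right₀ hb1.le (min_le_left _ _)
  have hM2 : (1 + δ) ^ m ≤ z₂ := by
    rw [hz₂]; exact zpow_le_zpow_right₀ hb1.le (min_le_right _ _)
  have hz₁u : u * a ≤ 2 * z₁ := by
    have h1 : u * a = u * (1 + δ) ^ K * (1 + u) := by rw [haK]; ring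
    nlinarith [mul_nonneg (mul_nonneg hu0.le (by linarith : (0:ℝ) ≤ 1 - u)) hK0.le]
  have hz₂u : u * a ≤ 2 * z₂ := by
    have h1 : u * a = u * (1 + δ) ^ K * (1 + u) := by rw [haK]; ring
    nlinarith [mul_nonneg (mul_nonneg hu0.le (by linarith : (0:ℝ) ≤ 1 - u)) hK0.le]
  -- bounds on p
  have hu1' : (0:ℝ) < 1 + u := by linarith
  have hlogba : Real.logb (1 + δ) a = (K:ℝ) + Real.log (1 + u) / ℓ := by
    rw [haK, Real.logb, Real.log_mul (ne_of_gt hK0) (ne_of_gt hu1'), Real.log_zpow,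
      ← hℓdef]
    field_simp
  have hfrac : p = Int.fract (Real.log (1 + u) / ℓ) := by
    have : Int.fract (Real.logb (1 + δ) a) = Int.fract (Real.log (1 + u) / ℓ) := by
      rw [hlogba, Int.fract_intCast_add]
    rw [hp, ← this, Int.fract]
  have hp0 : 0 ≤ p := by rw [hfrac]; exact Int.fract_nonneg _
  have hlu0 : 0 ≤ Real.log (1 + u) / ℓ :=
    div_nonneg (Real.log_nonneg (by linarith)) hℓ0.le
  have hpt : p ≤ Real.log (1 + u) / ℓ := by
    rw [hfrac, Int.fract]
    have h1 : (0:ℤ) ≤ ⌊Real.log (1 + u) / ℓ⌋ := Int.floor_nonneg.mpr hlu0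
    have h2 : (0:ℝ) ≤ (⌊Real.log (1 + u) / ℓ⌋ : ℝ) := by exact_mod_cast h1
    linarith
  have hpu : p * ℓ ≤ u := by
    have h1 : Real.log (1 + u) ≤ u := by
      have := Real.log_le_sub_one_of_pos hu1'; linarith
    have h2 : p * ℓ ≤ (Real.log (1 + u) / ℓ) * ℓ :=
      mul_le_mul_of_nonneg_right hpt hℓ0.le
    rw [div_mul_cancel₀ _ (ne_of_gt hℓ0)] at h2
    linarith
  -- the key gaps
  set L := Real.logb (1 + δ) (a / (y₁ + y₂)) with hL
  clear_value L
  set v := z₁ * (y₁ + y₂) / (y₁ * a) with hv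
  clear_value v
  have hv0 : 0 < v := by rw [hv]; positivity
  have hvL : lam₁ - L = Real.log v / ℓ := by
    have hveq : v = (z₁ / y₁) / (a / (y₁ + y₂)) := by
      rw [hv]; field_simp
    rw [hlam₁, hL, Real.logb, Real.logb, hveq,
      Real.log_div (ne_of_gt (div_pos hz₁0 hy₁)) (ne_of_gt (div_pos ha0 hy12)),
      ← hℓdef]
    ring
  have hvB : v = 1 + (z₂ / a) * (B - 1) := by
    rw [hv, hBval, ha]; field_simp; ring
  have hza2 : z₂ / a ≤ 1 := by
    rw [div_le_one ha0]; rw [ha]; linarith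
  have hza0 : 0 ≤ z₂ / a := by positivity
  have hza1 : z₁ / a ≤ 1 := by
    rw [div_le_one ha0]; rw [ha]; linarith
  have hza10 : 0 ≤ z₁ / a := by positivity
  have hzau2 : u / 2 ≤ z₂ / a := by
    rw [le_div_iff₀ ha0]; linarith
  have hzau1 : u / 2 ≤ z₁ / a := by
    rw [le_div_iff₀ ha0]; linarith
  have hB1' : (0:ℝ) ≤ B - 1 := by linarith
  have hv1 : 1 ≤ v := by
    have h := mul_nonneg hza0 hB1'
    rw [hvB]; linarith only [h]
  have hvle : v ≤ B := by
    have h := mul_nonneg (by linarith only [hza2] : (0:ℝ) ≤ 1 - z₂/a) hB1'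
    rw [hvB]; linarith only [h]
  have hvle' : v ≤ 5/3 := le_trans hvle hBle
  -- gap 1 : lam₁ - L ≥ (3/10) u Δ
  have hlogv : (3/10) * u * Δ * ℓ ≤ Real.log v := by
    have h1 := log_ge_sub_one_div' hv0
    have h2 : (3/5) * (v - 1) ≤ 1 - 1/v := by
      rw [← sub_nonneg]
      have heq : 1 - 1/v - (3/5) * (v - 1) = (v - 1) * (1 - (3/5) * v) / v := by
        field_simp
      rw [heq]
      apply div_nonneg _ hv0.le
      apply mul_nonneg (by linarith only [hv1]) (by linarith only [hvle'])
    have h3 : (u/2) * (Δ * ℓ) ≤ (z₂/a) * (B - 1) := by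
      apply mul_le_mul hzau2 (by linarith) hΔℓ0 hza0
    have h5 : v - 1 = (z₂/a) * (B - 1) := by rw [hvB]; ring
    linarith only [h1, h2, h3, h5]
  have hgap₁ : (3/10) * u * Δ ≤ lam₁ - L := by
    rw [hvL, le_div_iff₀ hℓ0]; linarith [hlogv]
  -- gap 2 : L - lam₂ ≥ (3/10) u Δ
  have hlogB : Real.log B = Δ * ℓ := by
    rw [hBdef, Real.log_rpow hb0, ← hℓdef]
  have hlogBv : (3/10) * u * Δ * ℓ ≤ Real.log B - Real.log v := by
    have hBv0 : 0 < B / v := div_pos hB0 hv0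
    have h1 := log_ge_sub_one_div' hBv0
    have h2 : Real.log (B / v) = Real.log B - Real.log v :=
      Real.log_div (ne_of_gt hB0) (ne_of_gt hv0)
    have h3 : 1/(B/v) = v/B := by
      rw [one_div_div]
    rw [h3] at h1
    have h4 : (3/5) * (B - v) ≤ 1 - v/B := by
      rw [← sub_nonneg]
      have heq : 1 - v/B - (3/5) * (B - v) = (B - v) * (1 - (3/5) * B) / B := by
        field_simp
      rw [heq]
      apply div_nonneg _ hB0.le
      apply mul_nonneg (by linarith only [hvle]) (by linarith only [hBle])
    have h5 : B - v = (z₁/a) * (B - 1) := by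
      have hz : z₁ / a = 1 - z₂ / a := by
        field_simp; rw [ha]; ring
      rw [hz, hvB]; ring
    have h6 : (u/2) * (Δ * ℓ) ≤ (z₁/a) * (B - 1) := by
      apply mul_le_mul hzau1 (by linarith) hΔℓ0 hza10
    linarith only [h1, h2, h4, h5, h6]
  have hgap₂ : (3/10) * u * Δ ≤ L - lam₂ := by
    have h1 : L - lam₂ = (Real.log B - Real.log v) / ℓ := by
      rw [hlogB]
      have : L = lam₁ - Real.log v / ℓ := by linarith [hvL]
      rw [this]
      field_simp
      rw [hΔdef]
      ring
    rw [h1, le_div_iff₀ hℓ0]; linarith [hlogBv]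
  -- compare with the correction term
  have hc : (1/20) * δ * p * Δ ≤ (3/10) * u * Δ := by
    have h1 : p * δ ≤ (3/2) * u := by
      have h := mul_le_mul_of_nonneg_left hℓlb hp0
      linarith only [h, hpu]
    have h2 : p * δ * Δ ≤ (3/2) * u * Δ :=
      mul_le_mul_of_nonneg_right h1 hΔ0
    linarith only [h2, mul_nonneg hu0.le hΔ0]
  rw [abs_of_nonneg hΔ0, abs_le]
  constructor
  · have h1 := neg_abs_le lam₂
    have h2 := le_max_right |lam₁| |lam₂|
    linarith
  · have h1 := le_abs_self lam₁
    have h2 := le_max_left |lam₁| |lam₂|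
    linarith

theorem self_correct (δ : ℝ) (hδ0 : 0 < δ) (hδ : δ < 1/2)
    (y₁ y₂ : ℝ) (hy₁ : 0 < y₁) (hy₂ : 0 < y₂) (k₁ k₂ : ℤ)
    (z₁ z₂ : ℝ) (hz₁ : z₁ = (1 + δ) ^ k₁) (hz₂ : z₂ = (1 + δ) ^ k₂)
    (lam₁ lam₂ : ℝ)
    (hlam₁ : lam₁ = Real.logb (1 + δ) (z₁ / y₁))
    (hlam₂ : lam₂ = Real.logb (1 + δ) (z₂ / y₂))
    (hmax : max |lam₁| |lam₂| < 1 / (4 * δ))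
    (a p : ℝ) (ha : a = z₁ + z₂)
    (hp : p = Real.logb (1 + δ) a - ⌊Real.logb (1 + δ) a⌋) :
    |Real.logb (1 + δ) (a / (y₁ + y₂))| ≤
      max |lam₁| |lam₂| - (1/20) * δ * p * |lam₁ - lam₂| := by
  rcases le_total lam₂ lam₁ with h | h
  · exact self_correct_aux δ hδ0 hδ y₁ y₂ hy₁ hy₂ k₁ k₂ z₁ z₂ hz₁ hz₂
      lam₁ lam₂ hlam₁ hlam₂ h hmax a p ha hp
  · have h2 := self_correct_aux δ hδ0 hδ y₂ y₁ hy₂ hy₁ k₂ k₁ z₂ z₁ hz₂ hz₁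
      lam₂ lam₁ hlam₂ hlam₁ h (by rwa [max_comm]) a p (by rw [ha]; ring) hp
    rw [add_comm y₂ y₁, max_comm, abs_sub_comm] at h2
    exact h2
end

section
/- For all real numbers t and p with 0 < t < 1/2 and 0 ≤ p ≤ 1, one has p·e^{t(1−p)} + (1−p)·e^{−tp} ≤ e^{t²·p}. -/
theorem mgf_bound_up (t p : ℝ) (ht0 : 0 < t) (ht : t < 1/2)
    (hp0 : 0 ≤ p) (hp1 : p ≤ 1) :
    p * Real.exp (t * (1 - p)) + (1 - p) * Real.exp (-(t * p)) ≤
      Real.exp (t ^ 2 * p) := by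
  have hexp : Real.exp t ≤ 1 + t + t ^ 2 := by
    have hb := Real.exp_bound (x := t) (by rw [abs_of_pos ht0]; linarith) (n := 2)
      (by norm_num)
    have h2 : |Real.exp t - (1 + t)| ≤ t ^ 2 * (3 / (2 * 2)) := by
      simpa [Finset.sum_range_succ, Nat.factorial] using hb
    have := abs_le.mp h2
    nlinarith
  have hsplit : t * (1 - p) = t + -(t * p) := by ring
  have h1 : p * Real.exp (t * (1 - p)) + (1 - p) * Real.exp (-(t * p))
      = Real.exp (-(t * p)) * (1 + p * (Real.exp t - 1)) := by
    rw [hsplit, Real.exp_add]; ring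
  rw [h1]
  have h2 : 1 + p * (Real.exp t - 1) ≤ Real.exp (p * (Real.exp t - 1)) := by
    have := Real.add_one_le_exp (p * (Real.exp t - 1)); linarith
  have h3 : Real.exp (-(t * p)) * (1 + p * (Real.exp t - 1))
      ≤ Real.exp (-(t * p)) * Real.exp (p * (Real.exp t - 1)) := by
    apply mul_le_mul_of_nonneg_left h2 (Real.exp_pos _).le
  refine h3.trans ?_
  rw [← Real.exp_add]
  apply Real.exp_le_exp.mpr
  nlinarith [Real.add_one_le_exp t]
end

section
/- For all real numbers t and p with 0 < t < 1/2 and 0 ≤ p ≤ 1, one has p·e^{−t(1−p)} + (1−p)·e^{tp} ≤ e^{t²·p}. -/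
theorem mgf_bound_down (t p : ℝ) (ht0 : 0 < t) (ht : t < 1/2)
    (hp0 : 0 ≤ p) (hp1 : p ≤ 1) :
    p * Real.exp (-(t * (1 - p))) + (1 - p) * Real.exp (t * p) ≤
      Real.exp (t ^ 2 * p) := by
  have hexp : 0 < Real.exp (-t) := Real.exp_pos _
  have h1t : (0:ℝ) < 1 + t := by linarith
  have hadd : t + 1 ≤ Real.exp t := Real.add_one_le_exp t
  have hmul : Real.exp (-t) * (1 + t) ≤ 1 := by
    have : Real.exp (-t) * (1 + t) ≤ Real.exp (-t) * Real.exp t := by nlinarith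
    calc Real.exp (-t) * (1 + t) ≤ Real.exp (-t) * Real.exp t := this
      _ = 1 := by rw [← Real.exp_add]; simp
  have het : Real.exp (-t) ≤ 1 - t + t ^ 2 := by nlinarith
  have h2 : p * Real.exp (-t) + (1 - p) ≤ Real.exp (p * (t ^ 2 - t)) := by
    have hle : -(p * (1 - Real.exp (-t))) + 1 ≤ Real.exp (-(p * (1 - Real.exp (-t)))) :=
      Real.add_one_le_exp _
    have hmono : Real.exp (-(p * (1 - Real.exp (-t)))) ≤ Real.exp (p * (t ^ 2 - t)) :=
      Real.exp_le_exp.mpr (by nlinarith)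
    nlinarith
  calc p * Real.exp (-(t * (1 - p))) + (1 - p) * Real.exp (t * p)
      = Real.exp (t * p) * (p * Real.exp (-t) + (1 - p)) := by
        rw [show -(t * (1 - p)) = t * p + (-t) by ring, Real.exp_add]; ring
    _ ≤ Real.exp (t * p) * Real.exp (p * (t ^ 2 - t)) :=
        mul_le_mul_of_nonneg_left h2 (Real.exp_pos _).le
    _ = Real.exp (t ^ 2 * p) := by rw [← Real.exp_add]; ring_nf
end

section
/- Let T be an Approximate Addition Tree with parameter δ > 0 and maximum depth h (the depth of a node is its distance from the root), in which every node has positive exact value. Then, with probability 1 (i.e. for every realization of the random rounding choices), every node v satisfies |λ_v| ≤ h + 1, where λ_v = log_{(1+δ)}(z_v / y_v) is the error at v. In particular, if additionally ε ∈ (0, 1/2) and δ ≤ ε/(4(h+1)), then for every node v one has max{ z_v/y_v , y_v/z_v } < 1 + ε. -/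
/-- An Addition Tree: a full rooted binary tree whose leaves carry
non-negative integer inputs. -/
inductive AddTree where
  | leaf : ℕ → AddTree
  | node : AddTree → AddTree → AddTree

namespace AddTree

/-- The exact value computed at (the root of) an Addition Tree:
inputs at leaves, sums at internal nodes. -/
def exactVal : AddTree → ℕ
  | leaf x => x
  | node t₁ t₂ => exactVal t₁ + exactVal t₂

/-- The number of nodes of the tree. -/
def size : AddTree → ℕ
  | leaf _ => 1
  | node t₁ t₂ => size t₁ + size t₂ + 1

/-- The number of internal nodes of the tree. -/
def numInternal : AddTree → ℕ
  | leaf _ => 0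
  | node t₁ t₂ => numInternal t₁ + numInternal t₂ + 1

/-- The maximum depth (height) of the tree. -/
def height : AddTree → ℕ
  | leaf _ => 0
  | node t₁ t₂ => max (height t₁) (height t₂) + 1

/-- The balanced height of (the root of) the tree. -/
def bh : AddTree → ℕ
  | leaf _ => 0
  | node t₁ t₂ => if bh t₁ = bh t₂ then bh t₁ + 1 else max (bh t₁) (bh t₂)

/-- Every node of the tree has positive exact value (equivalently, every
leaf input is positive). -/
def allPositive : AddTree → Prop
  | leaf x => 0 < x
  | node t₁ t₂ => allPositive t₁ ∧ allPositive t₂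

/-- The approximate value computed by an Approximate Addition Tree with
parameter `δ`.  The internal nodes of the tree are assigned distinct indices
(the root of the subtree rooted at index `i` uses the random number `ω i`,
its left subtree uses indices starting at `i + 1`, and its right subtree
indices starting at `i + 1 + numInternal t₁`).  At an internal node the sum
`a` of the children's approximate values is randomly rounded to
`(1 + δ) ^ ⌊log_{1+δ} a + r⌋`, where `r = ω i` is the uniform random choice
at that node (and `0` stays `0`). -/
noncomputable def approxVal (δ : ℝ) (ω : ℕ → ℝ) : AddTree → ℕ → ℝ
  | leaf x, _ => (x : ℝ)
  | node t₁ t₂, i =>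
      let a := approxVal δ ω t₁ (i + 1) + approxVal δ ω t₂ (i + 1 + numInternal t₁)
      if a = 0 then 0 else (1 + δ) ^ (⌊Real.logb (1 + δ) a + ω i⌋ : ℤ)

/-- The list of all nodes (subtrees) of the tree, each paired with the
index it receives in the indexing scheme of `approxVal`, when the root
receives index `i`. -/
def nodesIdx : AddTree → ℕ → List (AddTree × ℕ)
  | leaf x, i => [(leaf x, i)]
  | node t₁ t₂, i =>
      (node t₁ t₂, i) ::
        (nodesIdx t₁ (i + 1) ++ nodesIdx t₂ (i + 1 + numInternal t₁))

/-- The error `λ_v = log_{1+δ} (z_v / y_v)` at the node `v` whose assigned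
index is `i`, given the random choices `ω`. -/
noncomputable def err (δ : ℝ) (ω : ℕ → ℝ) (v : AddTree) (i : ℕ) : ℝ :=
  Real.logb (1 + δ) (approxVal δ ω v i / (exactVal v : ℝ))

/-- The uniform probability measure on `(0,1)^m`: the random source of an
Approximate Addition Tree with `m` internal nodes. -/
noncomputable def unif (m : ℕ) : MeasureTheory.Measure (Fin m → ℝ) :=
  MeasureTheory.Measure.pi fun _ => MeasureTheory.volume.restrict (Set.Ioo (0:ℝ) 1)

/-- Extend a finite tuple of random choices to a function `ℕ → ℝ`
(coordinates beyond `m` are irrelevant for `approxVal` on a tree with `m`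
internal nodes whose root gets index `0`). -/
noncomputable def extend {m : ℕ} (ω : Fin m → ℝ) : ℕ → ℝ :=
  fun j => if h : j < m then ω ⟨j, h⟩ else 1/2

end AddTree

namespace AddTree

lemma exactVal_pos {t : AddTree} (h : t.allPositive) : 0 < t.exactVal := by
  induction t with
  | leaf x => exact h
  | node t₁ t₂ ih₁ ih₂ => exact Nat.add_pos_left (ih₁ h.1) _

lemma approx_bounds (δ : ℝ) (hδ : 0 < δ) (ω : ℕ → ℝ)
    (hω : ∀ i, ω i ∈ Set.Ioo (0:ℝ) 1)
    (t : AddTree) (hpos : t.allPositive) (i : ℕ) :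
    (1+δ) ^ (-(t.height:ℤ)) * t.exactVal ≤ approxVal δ ω t i ∧
    approxVal δ ω t i ≤ (1+δ) ^ ((t.height:ℤ)) * t.exactVal := by
  have hb : (1:ℝ) < 1 + δ := by linarith
  have hb0 : (0:ℝ) < 1 + δ := by linarith
  induction t generalizing i with
  | leaf x => simp [approxVal, height, exactVal]
  | node t₁ t₂ ih₁ ih₂ =>
    obtain ⟨l₁, u₁⟩ := ih₁ hpos.1 (i+1)
    obtain ⟨l₂, u₂⟩ := ih₂ hpos.2 (i+1+numInternal t₁)
    set z₁ := approxVal δ ω t₁ (i+1)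
    set z₂ := approxVal δ ω t₂ (i+1+numInternal t₁)
    set y₁ := (t₁.exactVal : ℝ)
    set y₂ := (t₂.exactVal : ℝ)
    have hy₁ : (0:ℝ) < y₁ := Nat.cast_pos.mpr (exactVal_pos hpos.1)
    have hy₂ : (0:ℝ) < y₂ := Nat.cast_pos.mpr (exactVal_pos hpos.2)
    set H : ℕ := max t₁.height t₂.height with hH
    -- monotonicity of zpow bounds up to H
    have m₁u : (1+δ) ^ ((t₁.height:ℤ)) ≤ (1+δ) ^ ((H:ℤ)) :=
      zpow_le_zpow_right₀ hb.le (by exact_mod_cast le_max_left _ _)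
    have m₂u : (1+δ) ^ ((t₂.height:ℤ)) ≤ (1+δ) ^ ((H:ℤ)) :=
      zpow_le_zpow_right₀ hb.le (by exact_mod_cast le_max_right _ _)
    have m₁l : (1+δ) ^ (-(H:ℤ)) ≤ (1+δ) ^ (-(t₁.height:ℤ)) :=
      zpow_le_zpow_right₀ hb.le (by simp; exact_mod_cast le_max_left _ _)
    have m₂l : (1+δ) ^ (-(H:ℤ)) ≤ (1+δ) ^ (-(t₂.height:ℤ)) :=
      zpow_le_zpow_right₀ hb.le (by simp; exact_mod_cast le_max_right _ _)
    have ha_low : (1+δ) ^ (-(H:ℤ)) * (y₁ + y₂) ≤ z₁ + z₂ := by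
      have e₁ : (1+δ) ^ (-(H:ℤ)) * y₁ ≤ z₁ :=
        le_trans (by nlinarith [zpow_pos hb0 (-(t₁.height:ℤ))]) l₁
      have e₂ : (1+δ) ^ (-(H:ℤ)) * y₂ ≤ z₂ :=
        le_trans (by nlinarith [zpow_pos hb0 (-(t₂.height:ℤ))]) l₂
      nlinarith
    have ha_up : z₁ + z₂ ≤ (1+δ) ^ ((H:ℤ)) * (y₁ + y₂) := by
      have e₁ : z₁ ≤ (1+δ) ^ ((H:ℤ)) * y₁ :=
        u₁.trans (by nlinarith [zpow_pos hb0 ((t₁.height:ℤ))])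
      have e₂ : z₂ ≤ (1+δ) ^ ((H:ℤ)) * y₂ :=
        u₂.trans (by nlinarith [zpow_pos hb0 ((t₂.height:ℤ))])
      nlinarith
    have ha : (0:ℝ) < z₁ + z₂ :=
      lt_of_lt_of_le (by positivity) ha_low
    have hval : approxVal δ ω (node t₁ t₂) i
        = (1+δ) ^ (⌊Real.logb (1+δ) (z₁ + z₂) + ω i⌋ : ℤ) := by
      simp only [approxVal]
      rw [if_neg (by exact ha.ne')]
    set n : ℤ := ⌊Real.logb (1+δ) (z₁ + z₂) + ω i⌋ with hn
    obtain ⟨hω0, hω1⟩ := hω i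
    have hfl : (n:ℝ) ≤ Real.logb (1+δ) (z₁ + z₂) + ω i := Int.floor_le _
    have hfg : Real.logb (1+δ) (z₁ + z₂) + ω i - 1 < (n:ℝ) := Int.sub_one_lt_floor _
    -- z = b^n as rpow
    have hrw : (1+δ) ^ (n:ℤ) = (1+δ) ^ ((n:ℤ):ℝ) := (Real.rpow_intCast _ _).symm
    have hlogb : (1+δ) ^ (Real.logb (1+δ) (z₁+z₂)) = z₁ + z₂ :=
      Real.rpow_logb hb0 hb.ne' ha
    have hup : (1+δ) ^ (n:ℤ) ≤ (1+δ) * (z₁ + z₂) := by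
      rw [hrw]
      have : (1+δ) ^ ((n:ℤ):ℝ) ≤ (1+δ) ^ (Real.logb (1+δ) (z₁+z₂) + 1) :=
        Real.rpow_le_rpow_left_iff hb |>.2 (by linarith)
      calc (1+δ) ^ ((n:ℤ):ℝ) ≤ (1+δ) ^ (Real.logb (1+δ) (z₁+z₂) + 1) := this
        _ = (1+δ) * (z₁ + z₂) := by
            rw [Real.rpow_add hb0, hlogb, Real.rpow_one]; ring
    have hlow : (z₁ + z₂) / (1+δ) ≤ (1+δ) ^ (n:ℤ) := by
      rw [hrw]
      have : (1+δ) ^ (Real.logb (1+δ) (z₁+z₂) - 1) ≤ (1+δ) ^ ((n:ℤ):ℝ) :=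
        Real.rpow_le_rpow_left_iff hb |>.2 (by linarith)
      calc (z₁ + z₂) / (1+δ) = (1+δ) ^ (Real.logb (1+δ) (z₁+z₂) - 1) := by
            rw [Real.rpow_sub hb0, hlogb, Real.rpow_one]
        _ ≤ (1+δ) ^ ((n:ℤ):ℝ) := this
    have hheight : ((node t₁ t₂).height : ℤ) = (H:ℤ) + 1 := by
      simp [height, hH]
    have hyeq : ((node t₁ t₂).exactVal : ℝ) = y₁ + y₂ := by
      simp [exactVal, y₁, y₂]
    rw [hval, hheight, hyeq]
    constructor
    · calc (1+δ) ^ (-((H:ℤ)+1)) * (y₁ + y₂)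
          = ((1+δ) ^ (-(H:ℤ)) * (y₁ + y₂)) / (1+δ) := by
            rw [show -((H:ℤ)+1) = -(H:ℤ) + (-1) by ring, zpow_add₀ hb0.ne', zpow_neg_one]; ring
        _ ≤ (z₁ + z₂) / (1+δ) := by gcongr
        _ ≤ (1+δ) ^ (n:ℤ) := hlow
    · calc (1+δ) ^ (n:ℤ) ≤ (1+δ) * (z₁ + z₂) := hup
        _ ≤ (1+δ) * ((1+δ) ^ ((H:ℤ)) * (y₁ + y₂)) := by nlinarith
        _ = (1+δ) ^ ((H:ℤ)+1) * (y₁ + y₂) := by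
            rw [zpow_add₀ hb0.ne', zpow_one]; ring

lemma mem_nodesIdx {t : AddTree} (hpos : t.allPositive) :
    ∀ i, ∀ p ∈ nodesIdx t i, p.1.allPositive ∧ p.1.height ≤ t.height := by
  induction t with
  | leaf x =>
    intro i p hp
    simp only [nodesIdx, List.mem_singleton] at hp
    subst hp; exact ⟨hpos, le_rfl⟩
  | node t₁ t₂ ih₁ ih₂ =>
    intro i p hp
    simp only [nodesIdx, List.mem_cons, List.mem_append] at hp
    rcases hp with h | h | h
    · subst h; exact ⟨hpos, le_rfl⟩
    · obtain ⟨h1, h2⟩ := ih₁ hpos.1 _ p h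
      exact ⟨h1, h2.trans (by simp [height]; omega)⟩
    · obtain ⟨h1, h2⟩ := ih₂ hpos.2 _ p h
      exact ⟨h1, h2.trans (by simp [height]; omega)⟩

lemma logb_zpow' {b : ℝ} (hb : 1 < b) (n : ℤ) : Real.logb b (b ^ n) = n := by
  have hb0 : (0:ℝ) < b := by linarith
  rw [show b ^ n = b ^ ((n:ℤ):ℝ) from (Real.rpow_intCast _ _).symm,
    Real.logb_rpow hb0 hb.ne']

lemma exp_quarter_lt {ε : ℝ} (hε : 0 < ε) (hε2 : ε < 1/2) :
    Real.exp (ε / 4) < 1 + ε := by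
  have h1 := Real.add_one_le_exp (-(ε/4))
  have h2 : Real.exp (ε/4) * Real.exp (-(ε/4)) = 1 := by
    rw [← Real.exp_add]; simp
  nlinarith [Real.exp_pos (ε/4), Real.exp_pos (-(ε/4))]

lemma base_pow_lt (δ ε : ℝ) (h : ℕ) (hδ : 0 < δ) (hε : 0 < ε) (hε2 : ε < 1/2)
    (hd : δ ≤ ε / (4 * ((h:ℝ) + 1))) : (1 + δ) ^ ((h:ℤ)) < 1 + ε := by
  have hh4 : (0:ℝ) < 4 * ((h:ℝ) + 1) := by positivity
  rw [le_div_iff₀ hh4] at hd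
  have hle : (1 + δ) ^ ((h:ℤ)) ≤ Real.exp (δ * h) := by
    rw [zpow_natCast]
    calc (1+δ:ℝ) ^ (h:ℕ) ≤ (Real.exp δ) ^ (h:ℕ) :=
          pow_le_pow_left₀ (by linarith) (by linarith [Real.add_one_le_exp δ]) _
      _ = Real.exp ((h:ℝ) * δ) := (Real.exp_nat_mul δ h).symm
      _ = Real.exp (δ * h) := by ring_nf
  have h2 : Real.exp (δ * h) ≤ Real.exp (ε / 4) := by
    apply Real.exp_le_exp.2
    have hh0 : (0:ℝ) ≤ (h:ℝ) := Nat.cast_nonneg _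
    nlinarith
  exact lt_of_le_of_lt (hle.trans h2) (exp_quarter_lt hε hε2)

lemma ratio_bounds (δ : ℝ) (hδ : 0 < δ) (ω : ℕ → ℝ)
    (hω : ∀ i, ω i ∈ Set.Ioo (0:ℝ) 1)
    (t : AddTree) (hpos : t.allPositive) (i : ℕ) (H : ℕ) (hH : t.height ≤ H) :
    0 < approxVal δ ω t i ∧
    approxVal δ ω t i / (t.exactVal : ℝ) ≤ (1+δ) ^ ((H:ℤ)) ∧
    (t.exactVal : ℝ) / approxVal δ ω t i ≤ (1+δ) ^ ((H:ℤ)) := by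
  have hb : (1:ℝ) < 1 + δ := by linarith
  have hb0 : (0:ℝ) < 1 + δ := by linarith
  obtain ⟨l, u⟩ := approx_bounds δ hδ ω hω t hpos i
  have hy : (0:ℝ) < (t.exactVal : ℝ) := Nat.cast_pos.mpr (exactVal_pos hpos)
  have hz : 0 < approxVal δ ω t i :=
    lt_of_lt_of_le (by positivity) l
  have m₁ : (1+δ) ^ ((t.height:ℤ)) ≤ (1+δ) ^ ((H:ℤ)) :=
    zpow_le_zpow_right₀ hb.le (by exact_mod_cast hH)
  have m₂ : (1+δ) ^ (-(H:ℤ)) ≤ (1+δ) ^ (-(t.height:ℤ)) :=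
    zpow_le_zpow_right₀ hb.le (by simp; exact_mod_cast hH)
  refine ⟨hz, ?_, ?_⟩
  · rw [div_le_iff₀ hy]
    calc approxVal δ ω t i ≤ (1+δ) ^ ((t.height:ℤ)) * t.exactVal := u
      _ ≤ (1+δ) ^ ((H:ℤ)) * t.exactVal := by nlinarith
  · rw [div_le_iff₀ hz]
    have hzl : (1+δ) ^ (-(H:ℤ)) * (t.exactVal:ℝ) ≤ approxVal δ ω t i :=
      le_trans (by nlinarith [zpow_pos hb0 (-(t.height:ℤ))]) l
    have hid : (1+δ) ^ ((H:ℤ)) * (1+δ) ^ (-(H:ℤ)) = 1 := by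
      rw [← zpow_add₀ hb0.ne']; simp
    calc (t.exactVal:ℝ) = (1+δ) ^ ((H:ℤ)) * ((1+δ) ^ (-(H:ℤ)) * t.exactVal) := by
          rw [← mul_assoc, hid, one_mul]
      _ ≤ (1+δ) ^ ((H:ℤ)) * approxVal δ ω t i := by
          have := zpow_pos hb0 ((H:ℤ)); nlinarith

end AddTree

/-- Paper's Theorem 4: in an Approximate Addition Tree of maximum depth `h`
with all exact values positive, for every realization of the random rounding
choices every node `v` satisfies `|λ_v| ≤ h + 1`; consequently, if
`ε ∈ (0, 1/2)` and `δ ≤ ε / (4 (h + 1))`, then every node satisfies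
`max (z_v / y_v) (y_v / z_v) < 1 + ε`. -/
theorem approxAdditionTree_bounded_depth (δ : ℝ) (hδ : 0 < δ)
    (T : AddTree) (hpos : T.allPositive)
    (ω : ℕ → ℝ) (hω : ∀ i, ω i ∈ Set.Ioo (0:ℝ) 1) :
    (∀ p ∈ T.nodesIdx 0, |AddTree.err δ ω p.1 p.2| ≤ (T.height : ℝ) + 1) ∧
      (∀ ε : ℝ, 0 < ε → ε < 1/2 → δ ≤ ε / (4 * ((T.height : ℝ) + 1)) →
        ∀ p ∈ T.nodesIdx 0,
          max (AddTree.approxVal δ ω p.1 p.2 / (p.1.exactVal : ℝ))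
              ((p.1.exactVal : ℝ) / AddTree.approxVal δ ω p.1 p.2) < 1 + ε) := by
  have hb : (1:ℝ) < 1 + δ := by linarith
  have hb0 : (0:ℝ) < 1 + δ := by linarith
  constructor
  · intro p hp
    obtain ⟨hp1, hp2⟩ := AddTree.mem_nodesIdx hpos 0 p hp
    obtain ⟨hz, hu, hl⟩ := AddTree.ratio_bounds δ hδ ω hω p.1 hp1 p.2 T.height hp2
    have hy : (0:ℝ) < (p.1.exactVal : ℝ) :=
      Nat.cast_pos.mpr (AddTree.exactVal_pos hp1)
    have hq : 0 < AddTree.approxVal δ ω p.1 p.2 / (p.1.exactVal : ℝ) := by positivity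
    have hql : (1+δ) ^ (-(T.height:ℤ)) ≤ AddTree.approxVal δ ω p.1 p.2 / (p.1.exactVal : ℝ) := by
      rw [div_le_iff₀ hz] at hl
      rw [le_div_iff₀ hy]
      have hid : (1+δ) ^ (-(T.height:ℤ)) * (1+δ) ^ ((T.height:ℤ)) = 1 := by
        rw [← zpow_add₀ hb0.ne']; simp
      have hp' : (0:ℝ) < (1+δ) ^ (-(T.height:ℤ)) := zpow_pos hb0 _
      nlinarith
    rw [AddTree.err, abs_le]
    constructor
    · calc -((T.height:ℝ) + 1) ≤ -(T.height:ℝ) := by linarith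
        _ = Real.logb (1+δ) ((1+δ) ^ (-(T.height:ℤ))) := by
            rw [AddTree.logb_zpow' hb]; push_cast; ring
        _ ≤ _ := Real.logb_le_logb_of_le hb (zpow_pos hb0 _) hql
    · calc Real.logb (1+δ) (AddTree.approxVal δ ω p.1 p.2 / (p.1.exactVal : ℝ))
          ≤ Real.logb (1+δ) ((1+δ) ^ ((T.height:ℤ))) :=
            Real.logb_le_logb_of_le hb hq hu
        _ = (T.height:ℝ) := by rw [AddTree.logb_zpow' hb]; push_cast; ring
        _ ≤ (T.height:ℝ) + 1 := by linarith
  · intro ε hε hε2 hd p hp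
    obtain ⟨hp1, hp2⟩ := AddTree.mem_nodesIdx hpos 0 p hp
    obtain ⟨hz, hu, hl⟩ := AddTree.ratio_bounds δ hδ ω hω p.1 hp1 p.2 T.height hp2
    have hlt : (1+δ) ^ ((T.height:ℤ)) < 1 + ε :=
      AddTree.base_pow_lt δ ε T.height hδ hε hε2 hd
    exact max_lt (lt_of_le_of_lt hu hlt) (lt_of_le_of_lt hl hlt)
end
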